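/- Let n ≥ 1 and let 𝔤 = u(n+1) = {A ∈ ℂ^{(n+1)×(n+1)} : Aᴴ = −A} with bracket the matrix commutator and invariant inner product ⟨A,B⟩ = −Re(tr(A·B)). Let 𝔥 = {diag(C, 0) : C ∈ ℂ^{n×n}, Cᴴ = −C} (u(n) embedded in the upper-left block), let 𝔪 = 𝔥^⊥, pr_𝔪 the orthogonal projection onto 𝔪, and 𝔪₀ = {v ∈ 𝔪 : ⁅w,v⁆ = 0 for all w ∈ 𝔥} (explicitly, 𝔪₀ = {diag(0,…,0, t·i) : t ∈ ℝ}). Then the set of Randers equigeodesic vectors contained in 𝔪 is exactly 𝔪₀ \ {0}. -/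

import Mathlib

open Matrix

attribute [local instance 100] LieRing.ofAssociativeRing

/-- The invariant inner product `⟨A,B⟩ = −Re(tr(A·B))` on complex matrices. -/
noncomputable def ipC (n : ℕ) (A B : Matrix (Fin (n + 1)) (Fin (n + 1)) ℂ) : ℝ :=
  -((A * B).trace).re

variable {n : ℕ}

lemma entry_of_skew {A : Matrix (Fin (n+1)) (Fin (n+1)) ℂ} (h : Aᴴ = -A) (p q : Fin (n+1)) :
    A q p = -star (A p q) := by
  have h1 := Matrix.ext_iff.mpr h p q
  simp only [Matrix.conjTranspose_apply, Matrix.neg_apply] at h1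
  have h2 := congrArg star h1
  simpa using h2

lemma skew_lie {A B : Matrix (Fin (n+1)) (Fin (n+1)) ℂ} (hA : Aᴴ = -A) (hB : Bᴴ = -B) :
    ⁅A, B⁆ᴴ = -⁅A, B⁆ := by
  simp only [Ring.lie_def, conjTranspose_sub, conjTranspose_mul, hA, hB]
  noncomm_ring

noncomputable def ipB (n : ℕ) :
    Matrix (Fin (n+1)) (Fin (n+1)) ℂ →ₗ[ℝ] Matrix (Fin (n+1)) (Fin (n+1)) ℂ →ₗ[ℝ] ℝ :=
  LinearMap.mk₂ ℝ (fun A B => -((A * B).trace).re)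
    (by intro A A' B
        rw [add_mul, trace_add, Complex.add_re]; ring)
    (by intro c A B
        rw [smul_mul_assoc, trace_smul, Complex.real_smul]; rw [Complex.mul_re]; simp [smul_eq_mul])
    (by intro A B B'
        rw [mul_add, trace_add, Complex.add_re]; ring)
    (by intro c A B
        rw [mul_smul_comm, trace_smul, Complex.real_smul]; rw [Complex.mul_re]; simp [smul_eq_mul])

lemma ipB_apply (A B : Matrix (Fin (n+1)) (Fin (n+1)) ℂ) :
    ipB n A B = -((A * B).trace).re := rfl

lemma ipB_symm (A B : Matrix (Fin (n+1)) (Fin (n+1)) ℂ) : ipB n A B = ipB n B A := by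
  rw [ipB_apply, ipB_apply, trace_mul_comm]

lemma ipB_self {A : Matrix (Fin (n+1)) (Fin (n+1)) ℂ} (hA : Aᴴ = -A) :
    ipB n A A = ∑ p, ∑ q, Complex.normSq (A p q) := by
  rw [ipB_apply]
  rw [Matrix.trace]
  simp only [Matrix.diag, mul_apply, Complex.re_sum, ← Finset.sum_neg_distrib]
  apply Finset.sum_congr rfl; intro p _
  apply Finset.sum_congr rfl; intro q _
  rw [entry_of_skew hA p q]
  have : A p q * -star (A p q) = -(A p q * (starRingEnd ℂ) (A p q)) := by
    simp only [Complex.star_def]; ring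
  rw [this, Complex.mul_conj]
  simp

lemma ipB_invariant (w u v : Matrix (Fin (n+1)) (Fin (n+1)) ℂ) :
    ipB n ⁅w, u⁆ v + ipB n u ⁅w, v⁆ = 0 := by
  simp only [Ring.lie_def, ipB_apply, sub_mul, mul_sub, trace_sub, Complex.sub_re,
    ← mul_assoc]
  rw [trace_mul_cycle u v w]
  ring

lemma lie_diagonal_apply (d : Fin (n+1) → ℂ) (A : Matrix (Fin (n+1)) (Fin (n+1)) ℂ)
    (p q : Fin (n+1)) : ⁅diagonal d, A⁆ p q = (d p - d q) * A p q := by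
  simp only [Ring.lie_def, Matrix.sub_apply, diagonal_mul, mul_diagonal]
  ring

lemma trace_mul_diagonal' (A : Matrix (Fin (n+1)) (Fin (n+1)) ℂ) (e : Fin (n+1) → ℂ) :
    (A * diagonal e).trace = ∑ p, A p p * e p := by
  simp [Matrix.trace, Matrix.diag, mul_diagonal]
variable {n : ℕ}

lemma trace_mul_std (A : Matrix (Fin (n+1)) (Fin (n+1)) ℂ) (p q : Fin (n+1)) (c : ℂ) :
    (A * single p q c).trace = A q p * c := by
  rw [Matrix.trace]
  rw [Finset.sum_eq_single q]
  · simp [Matrix.diag, Matrix.mul_single_apply_same]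
  · intro k _ hk
    simp [Matrix.diag, hk]
  · simp

lemma std_conjT (p q : Fin (n+1)) (c : ℂ) :
    (single p q c)ᴴ = single q p (star c) := by
  ext a b
  simp only [conjTranspose_apply, single, of_apply]
  by_cases h1 : q = a <;> by_cases h2 : p = b <;> simp [h1, h2, and_comm]

lemma mem_m_iff
    (𝔥 𝔪 : Submodule ℝ (Matrix (Fin (n+1)) (Fin (n+1)) ℂ))
    (h𝔥 : ∀ W, W ∈ 𝔥 ↔
      (Wᴴ = -W ∧ ∀ p : Fin (n + 1), W p (Fin.last n) = 0 ∧ W (Fin.last n) p = 0))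
    (h𝔪 : ∀ A, A ∈ 𝔪 ↔ (Aᴴ = -A ∧ ∀ W ∈ 𝔥, ipC n A W = 0))
    (A : Matrix (Fin (n+1)) (Fin (n+1)) ℂ) :
    A ∈ 𝔪 ↔ (Aᴴ = -A ∧ ∀ p q, p ≠ Fin.last n → q ≠ Fin.last n → A p q = 0) := by
  constructor
  · intro hA
    obtain ⟨hskew, horth⟩ := (h𝔪 A).1 hA
    refine ⟨hskew, fun p q hp hq => ?_⟩
    have haqp : A q p = -star (A p q) := entry_of_skew hskew p q
    have hW1 : single p q (1:ℂ) - single q p 1 ∈ 𝔥 := by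
      rw [h𝔥]
      refine ⟨?_, fun r => ?_⟩
      · rw [conjTranspose_sub, std_conjT, std_conjT]
        simp [neg_sub]
      · simp [Matrix.sub_apply, single, of_apply, hp, hq]
    have hW2 : Complex.I • (single p q (1:ℂ) + single q p 1) ∈ 𝔥 := by
      rw [h𝔥]
      refine ⟨?_, fun r => ?_⟩
      · rw [conjTranspose_smul, conjTranspose_add, std_conjT, std_conjT]
        simp [add_comm]
      · simp [Matrix.smul_apply, Matrix.add_apply, single, of_apply, hp, hq]
    have e1 := horth _ hW1
    have e2 := horth _ hW2
    rw [ipC, mul_sub, trace_sub, trace_mul_std, trace_mul_std, mul_one, mul_one, haqp] at e1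
    rw [ipC, mul_smul_comm, trace_smul, mul_add, trace_add, trace_mul_std, trace_mul_std,
      mul_one, mul_one, haqp] at e2
    simp only [Complex.sub_re, Complex.neg_re, Complex.star_def, Complex.conj_re] at e1
    simp only [smul_eq_mul, Complex.mul_re, Complex.add_re, Complex.add_im, Complex.neg_re,
      Complex.neg_im, Complex.star_def, Complex.conj_re, Complex.conj_im,
      Complex.I_re, Complex.I_im] at e2
    apply Complex.ext <;> simp <;> linarith
  · rintro ⟨hskew, hblock⟩
    rw [h𝔪]
    refine ⟨hskew, fun W hW => ?_⟩
    obtain ⟨-, hW2⟩ := (h𝔥 W).1 hW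
    have htr : (A * W).trace = 0 := by
      rw [Matrix.trace]
      apply Finset.sum_eq_zero
      intro k _
      show (A * W) k k = 0
      rw [mul_apply]
      apply Finset.sum_eq_zero
      intro j _
      by_cases hj : j = Fin.last n
      · rw [hj, (hW2 k).2, mul_zero]
      · by_cases hk : k = Fin.last n
        · rw [hk, (hW2 j).1, mul_zero]
        · rw [hblock k j hk hj, zero_mul]
    rw [ipC, htr]
    simp

lemma mem_m0_iff
    (𝔥 𝔪 𝔪₀ : Submodule ℝ (Matrix (Fin (n+1)) (Fin (n+1)) ℂ))
    (h𝔥 : ∀ W, W ∈ 𝔥 ↔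
      (Wᴴ = -W ∧ ∀ p : Fin (n + 1), W p (Fin.last n) = 0 ∧ W (Fin.last n) p = 0))
    (h𝔪 : ∀ A, A ∈ 𝔪 ↔ (Aᴴ = -A ∧ ∀ W ∈ 𝔥, ipC n A W = 0))
    (h𝔪₀ : ∀ v, v ∈ 𝔪₀ ↔ (v ∈ 𝔪 ∧ ∀ w ∈ 𝔥, ⁅w, v⁆ = 0))
    (A : Matrix (Fin (n+1)) (Fin (n+1)) ℂ) :
    A ∈ 𝔪₀ ↔ (Aᴴ = -A ∧
      ∀ p q, ¬(p = Fin.last n ∧ q = Fin.last n) → A p q = 0) := by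
  constructor
  · intro hA
    obtain ⟨hAm, hcomm⟩ := (h𝔪₀ A).1 hA
    obtain ⟨hskew, hblock⟩ := (mem_m_iff 𝔥 𝔪 h𝔥 h𝔪 A).1 hAm
    have hcol : ∀ p, p ≠ Fin.last n → A p (Fin.last n) = 0 := by
      intro p hp
      have hw : Complex.I • single p p (1:ℂ) ∈ 𝔥 := by
        rw [h𝔥]
        refine ⟨?_, fun r => ?_⟩
        · rw [conjTranspose_smul, std_conjT]; simp
        · simp [Matrix.smul_apply, single, of_apply, hp]
      have h0 := hcomm _ hw
      have h1 := Matrix.ext_iff.mpr h0 p (Fin.last n)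
      simp only [Ring.lie_def, Matrix.sub_apply, Matrix.zero_apply, mul_apply, Matrix.smul_apply,
        single, of_apply, ite_and] at h1
      simp [Finset.sum_ite_eq, Finset.sum_ite_eq', hp, Ne.symm hp] at h1
      exact h1
    refine ⟨hskew, fun p q hpq => ?_⟩
    by_cases hp : p = Fin.last n
    · by_cases hq : q = Fin.last n
      · exact absurd ⟨hp, hq⟩ hpq
      · rw [entry_of_skew hskew q p, hp]
        rw [hcol q hq]
        simp
    · by_cases hq : q = Fin.last n
      · rw [hq]; exact hcol p hp
      · exact hblock p q hp hq
  · rintro ⟨hskew, hent⟩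
    rw [h𝔪₀]
    constructor
    · rw [mem_m_iff 𝔥 𝔪 h𝔥 h𝔪]
      exact ⟨hskew, fun p q hp hq => hent p q (fun h => hp h.1)⟩
    · intro w hw
      obtain ⟨-, hW2⟩ := (h𝔥 w).1 hw
      ext p q
      simp only [Ring.lie_def, Matrix.sub_apply, mul_apply, Matrix.zero_apply]
      rw [Finset.sum_eq_zero, Finset.sum_eq_zero]
      · simp
      · intro k _
        by_cases hk : k = Fin.last n
        · rw [hk, (hW2 q).2, mul_zero]
        · rw [hent p k (fun h => hk h.2), zero_mul]
      · intro k _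
        by_cases hk : k = Fin.last n
        · rw [hk, (hW2 p).1, zero_mul]
        · rw [hent k q (fun h => hk h.1), mul_zero]

def dfun (n : ℕ) : Fin (n+1) → ℂ := fun p => if p = Fin.last n then 0 else Complex.I

def efun (n : ℕ) : Fin (n+1) → ℂ := fun p => if p = Fin.last n then Complex.I else 0

lemma dfun_last : dfun n (Fin.last n) = 0 := if_pos rfl

lemma w0_skew : (diagonal (dfun n))ᴴ = -(diagonal (dfun n)) := by
  ext a b
  simp only [conjTranspose_apply, neg_apply, diagonal_apply]
  by_cases h : a = b
  · subst h; simp only [if_pos rfl, dfun]; split_ifs <;> simp_all [dfun]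
  · simp [h, Ne.symm h]

lemma E0_skew : (diagonal (efun n))ᴴ = -(diagonal (efun n)) := by
  ext a b
  simp only [conjTranspose_apply, neg_apply, diagonal_apply]
  by_cases h : a = b
  · subst h; simp only [if_pos rfl, efun]; split_ifs <;> simp_all [efun]
  · simp [h, Ne.symm h]

lemma w0_mem
    (𝔥 : Submodule ℝ (Matrix (Fin (n+1)) (Fin (n+1)) ℂ))
    (h𝔥 : ∀ W, W ∈ 𝔥 ↔
      (Wᴴ = -W ∧ ∀ p : Fin (n + 1), W p (Fin.last n) = 0 ∧ W (Fin.last n) p = 0)) :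
    diagonal (dfun n) ∈ 𝔥 := by
  rw [h𝔥]
  refine ⟨w0_skew, fun p => ?_⟩
  constructor <;> simp [Matrix.diagonal_apply, dfun] <;> split_ifs <;> simp_all

lemma ipB_diag_e (A : Matrix (Fin (n+1)) (Fin (n+1)) ℂ) :
    ipB n A (diagonal (efun n)) = (A (Fin.last n) (Fin.last n)).im := by
  rw [ipB_apply, trace_mul_diagonal']
  rw [Finset.sum_eq_single (Fin.last n)]
  · simp [efun, Complex.mul_I_re]
  · intro k _ hk; simp [efun, hk]
  · simp

lemma ipB_E0_E0 : ipB n (diagonal (efun n)) (diagonal (efun n)) = 1 := by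
  rw [ipB_diag_e]
  simp [Matrix.diagonal_apply_eq, efun]

lemma key_comp (X : Matrix (Fin (n+1)) (Fin (n+1)) ℂ) (hskew : Xᴴ = -X) :
    ipB n ⁅X, ⁅diagonal (dfun n), X⁆⁆ (diagonal (efun n))
      = ∑ k, (if k = Fin.last n then (0:ℝ)
          else -2 * Complex.normSq (X (Fin.last n) k)) := by
  rw [ipB_diag_e]
  have hZ : ∀ a b, (⁅diagonal (dfun n), X⁆) a b = (dfun n a - dfun n b) * X a b :=
    lie_diagonal_apply _ X
  have hY : ⁅X, ⁅diagonal (dfun n), X⁆⁆ (Fin.last n) (Fin.last n)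
      = ∑ k, 2 * dfun n k * (X (Fin.last n) k * X k (Fin.last n)) := by
    conv_lhs => rw [Ring.lie_def]
    rw [Matrix.sub_apply, mul_apply, mul_apply, ← Finset.sum_sub_distrib]
    apply Finset.sum_congr rfl
    intro k _
    rw [hZ k (Fin.last n), hZ (Fin.last n) k, dfun_last]
    ring
  rw [hY, Complex.im_sum]
  apply Finset.sum_congr rfl
  intro k _
  by_cases hk : k = Fin.last n
  · simp [hk, dfun_last]
  · have hkl : X k (Fin.last n) = -star (X (Fin.last n) k) :=
      entry_of_skew hskew (Fin.last n) k
    have hns : X (Fin.last n) k * X k (Fin.last n)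
        = -(Complex.normSq (X (Fin.last n) k) : ℂ) := by
      rw [hkl, ← Complex.mul_conj, Complex.star_def]
      ring
    rw [hns]
    simp only [dfun, if_neg hk, hk, if_false]
    simp [Complex.mul_im, Complex.mul_re]

lemma ipB_pos {A : Matrix (Fin (n+1)) (Fin (n+1)) ℂ} (hA : Aᴴ = -A) (h : A ≠ 0) :
    0 < ipB n A A := by
  rw [ipB_self hA]
  have hex : ∃ p q, A p q ≠ 0 := by
    by_contra h'
    push_neg at h'
    exact h (by ext p q; simp [h' p q])
  obtain ⟨p, q, hpq⟩ := hex
  have h1 : 0 < ∑ q', Complex.normSq (A p q') :=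
    Finset.sum_pos' (fun _ _ => Complex.normSq_nonneg _)
      ⟨q, Finset.mem_univ q, Complex.normSq_pos.mpr hpq⟩
  exact Finset.sum_pos'
    (fun _ _ => Finset.sum_nonneg fun _ _ => Complex.normSq_nonneg _)
    ⟨p, Finset.mem_univ p, h1⟩

/-- An invariant inner product on the subspace `𝔪` of the Lie algebra `L`, encoded as a
bilinear form on `L` which is symmetric and positive definite on `𝔪`, and `ad 𝔥`-invariant
on `𝔪`. -/
def IsInvariantInnerOn {L : Type*} [LieRing L] [LieAlgebra ℝ L]
    (𝔥 𝔪 : Submodule ℝ L) (α : L →ₗ[ℝ] L →ₗ[ℝ] ℝ) : Prop :=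
  (∀ u ∈ 𝔪, ∀ v ∈ 𝔪, α u v = α v u) ∧
  (∀ u ∈ 𝔪, u ≠ 0 → 0 < α u u) ∧
  (∀ w ∈ 𝔥, ∀ u ∈ 𝔪, ∀ v ∈ 𝔪, α ⁅w, u⁆ v + α u ⁅w, v⁆ = 0)

/-- `X` is a Randers equigeodesic vector: the geodesic-vector criterion
`α(pr_𝔪 ⁅X,Z⁆, X) + √(α(X,X))·α(pr_𝔪 ⁅X,Z⁆, u) = 0` for every invariant inner product
`α` on `𝔪`, every `u ∈ 𝔪₀` with `α(u,u) < 1`, and every `Z ∈ 𝔪`. -/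
def IsRandersEquigeodesicVector {L : Type*} [LieRing L] [LieAlgebra ℝ L]
    (𝔥 𝔪 𝔪₀ : Submodule ℝ L) (pr : L →ₗ[ℝ] L) (X : L) : Prop :=
  ∀ α : L →ₗ[ℝ] L →ₗ[ℝ] ℝ, IsInvariantInnerOn 𝔥 𝔪 α →
    ∀ u ∈ 𝔪₀, α u u < 1 →
      ∀ Z ∈ 𝔪, α (pr ⁅X, Z⁆) X + Real.sqrt (α X X) * α (pr ⁅X, Z⁆) u = 0

/-- **Randers equigeodesic vectors for the sphere `S^{2n+1} = U(n+1)/U(n)`, `n ≥ 1`.**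
Here `𝔤 = u(n+1)` with the commutator bracket and the invariant inner product
`⟨A,B⟩ = −Re(tr(A·B))`, `𝔥 = u(n)` embedded in the upper-left block, `𝔪 = 𝔥ᗮ`
(inside `𝔤`), and `𝔪₀` the fixed-point set of `ad 𝔥` on `𝔪`.  The set of Randers
equigeodesic vectors contained in `𝔪` is exactly `𝔪₀ \ {0}`. -/
theorem randers_equigeodesic_vectors_of_u_n_plus_one_quotient_u_n
    (n : ℕ) (hn : 1 ≤ n)
    (𝔥 : Submodule ℝ (Matrix (Fin (n + 1)) (Fin (n + 1)) ℂ))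
    (h𝔥 : ∀ W, W ∈ 𝔥 ↔
      (Wᴴ = -W ∧ ∀ p : Fin (n + 1), W p (Fin.last n) = 0 ∧ W (Fin.last n) p = 0))
    (𝔪 : Submodule ℝ (Matrix (Fin (n + 1)) (Fin (n + 1)) ℂ))
    (h𝔪 : ∀ A, A ∈ 𝔪 ↔ (Aᴴ = -A ∧ ∀ W ∈ 𝔥, ipC n A W = 0))
    (𝔪₀ : Submodule ℝ (Matrix (Fin (n + 1)) (Fin (n + 1)) ℂ))
    (h𝔪₀ : ∀ v, v ∈ 𝔪₀ ↔ (v ∈ 𝔪 ∧ ∀ w ∈ 𝔥, ⁅w, v⁆ = 0))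
    (pr : Matrix (Fin (n + 1)) (Fin (n + 1)) ℂ →ₗ[ℝ] Matrix (Fin (n + 1)) (Fin (n + 1)) ℂ)
    (hpr : ∀ A : Matrix (Fin (n + 1)) (Fin (n + 1)) ℂ,
      Aᴴ = -A → pr A ∈ 𝔪 ∧ A - pr A ∈ 𝔥) :
    ∀ X : Matrix (Fin (n + 1)) (Fin (n + 1)) ℂ,
      (X ∈ 𝔪 ∧ X ≠ 0 ∧ IsRandersEquigeodesicVector 𝔥 𝔪 𝔪₀ pr X) ↔
        (X ∈ 𝔪₀ ∧ X ≠ 0) := by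
  intro X
  have hm_iff := mem_m_iff 𝔥 𝔪 h𝔥 h𝔪
  have hm0_iff := mem_m0_iff 𝔥 𝔪 𝔪₀ h𝔥 h𝔪 h𝔪₀
  have hE0m0 : diagonal (efun n) ∈ 𝔪₀ := by
    rw [hm0_iff]
    refine ⟨E0_skew, fun p q hpq => ?_⟩
    by_cases h : p = q
    · subst h
      have hp : p ≠ Fin.last n := fun h => hpq ⟨h, h⟩
      simp [diagonal_apply_eq, efun, hp]
    · simp [diagonal_apply_ne _ h]
  have hE0m : diagonal (efun n) ∈ 𝔪 := ((h𝔪₀ _).1 hE0m0).1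
  have hprm : ∀ A ∈ 𝔪, pr A = A := by
    intro A hA
    have hskew : Aᴴ = -A := ((h𝔪 A).1 hA).1
    obtain ⟨h1, h2⟩ := hpr A hskew
    have hmem : A - pr A ∈ 𝔪 := Submodule.sub_mem _ hA h1
    obtain ⟨hs, ho⟩ := (h𝔪 _).1 hmem
    have hipz : ipB n (A - pr A) (A - pr A) = 0 := ho _ h2
    have hz : A - pr A = 0 := by
      by_contra hne
      exact absurd hipz (ne_of_gt (ipB_pos hs hne))
    rw [sub_eq_zero] at hz
    exact hz.symm
  have hw0 : diagonal (dfun n) ∈ 𝔥 := w0_mem 𝔥 h𝔥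
  constructor
  · rintro ⟨hXm, hXne, hreg⟩
    refine ⟨?_, hXne⟩
    obtain ⟨hXskew, hXblock⟩ := (hm_iff X).1 hXm
    set Z := ⁅diagonal (dfun n), X⁆ with hZdef
    have hZskew : Zᴴ = -Z := skew_lie w0_skew hXskew
    have hZm : Z ∈ 𝔪 := by
      rw [hm_iff]
      refine ⟨hZskew, fun p q hp hq => ?_⟩
      rw [hZdef, lie_diagonal_apply]
      simp [dfun, hp, hq]
    have hinv : IsInvariantInnerOn 𝔥 𝔪 (ipB n) :=
      ⟨fun u _ v _ => ipB_symm u v,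
       fun u hu hne => ipB_pos ((h𝔪 u).1 hu).1 hne,
       fun w _ u _ v _ => ipB_invariant w u v⟩
    set Y := ⁅X, Z⁆ with hYdef
    have hYskew : Yᴴ = -Y := skew_lie hXskew hZskew
    have e1 := hreg (ipB n) hinv 0 (Submodule.zero_mem _) (by simp) Z hZm
    have e2 := hreg (ipB n) hinv ((1/2 : ℝ) • diagonal (efun n))
      (Submodule.smul_mem _ _ hE0m0)
      (by simp only [_root_.map_smul, LinearMap.smul_apply, ipB_E0_E0, smul_eq_mul]; norm_num) Z hZm
    rw [show ((ipB n) (pr ⁅X, Z⁆)) (0 : Matrix (Fin (n+1)) (Fin (n+1)) ℂ) = 0 from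
      map_zero _, mul_zero, add_zero] at e1
    rw [e1, zero_add, _root_.map_smul, smul_eq_mul] at e2
    have hsq : 0 < Real.sqrt (ipB n X X) := Real.sqrt_pos.mpr (ipB_pos hXskew hXne)
    have e3 : ipB n (pr Y) (diagonal (efun n)) = 0 := by
      have := mul_eq_zero.mp e2
      rcases this with h | h
      · exact absurd h (ne_of_gt hsq)
      · rcases mul_eq_zero.mp h with h' | h'
        · norm_num at h'
        · exact h'
    have hsub : ipB n (Y - pr Y) (diagonal (efun n)) = 0 := by
      have hYh : Y - pr Y ∈ 𝔥 := (hpr Y hYskew).2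
      have := ((h𝔪 _).1 hE0m).2 _ hYh
      rw [ipB_symm]
      exact this
    have hYE0 : ipB n Y (diagonal (efun n)) = 0 := by
      have : ipB n (Y - pr Y) (diagonal (efun n))
          = ipB n Y (diagonal (efun n)) - ipB n (pr Y) (diagonal (efun n)) := by
        rw [map_sub, LinearMap.sub_apply]
      rw [this, e3, sub_zero] at hsub
      exact hsub
    rw [hYdef, hZdef, key_comp X hXskew] at hYE0
    have hzero : ∀ k, k ≠ Fin.last n → X (Fin.last n) k = 0 := by
      have hsum : ∑ k, (if k = Fin.last n then (0:ℝ)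
          else 2 * Complex.normSq (X (Fin.last n) k)) = 0 := by
        have : ∀ k ∈ Finset.univ, (if k = Fin.last n then (0:ℝ)
            else 2 * Complex.normSq (X (Fin.last n) k))
            = -(if k = Fin.last n then (0:ℝ)
            else -2 * Complex.normSq (X (Fin.last n) k)) := by
          intro k _; split_ifs <;> ring
        rw [Finset.sum_congr rfl this, Finset.sum_neg_distrib, hYE0, neg_zero]
      have hnn : ∀ k ∈ Finset.univ, 0 ≤ (if k = Fin.last n then (0:ℝ)
          else 2 * Complex.normSq (X (Fin.last n) k)) := by
        intro k _; split_ifs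
        · exact le_refl 0
        · have := Complex.normSq_nonneg (X (Fin.last n) k); linarith
      intro k hk
      have := (Finset.sum_eq_zero_iff_of_nonneg hnn).mp hsum k (Finset.mem_univ k)
      rw [if_neg hk] at this
      have : Complex.normSq (X (Fin.last n) k) = 0 := by linarith
      exact Complex.normSq_eq_zero.mp this
    rw [hm0_iff]
    refine ⟨hXskew, fun p q hpq => ?_⟩
    by_cases hp : p = Fin.last n
    · have hq : q ≠ Fin.last n := fun h => hpq ⟨hp, h⟩
      rw [hp]; exact hzero q hq
    · by_cases hq : q = Fin.last n
      · rw [entry_of_skew hXskew q p, hq, hzero p hp]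
        simp
      · exact hXblock p q hp hq
  · rintro ⟨hXm0, hXne⟩
    have hXm : X ∈ 𝔪 := ((h𝔪₀ X).1 hXm0).1
    refine ⟨hXm, hXne, ?_⟩
    intro α hα u hu hu1 Z hZm
    obtain ⟨hsym, hposα, hinvα⟩ := hα
    obtain ⟨hXskew, hXent⟩ := (hm0_iff X).1 hXm0
    have hZskew : Zᴴ = -Z := ((h𝔪 Z).1 hZm).1
    set Y := ⁅X, Z⁆ with hYdef
    have hYskew : Yᴴ = -Y := skew_lie hXskew hZskew
    have hYb : ∀ p q, p ≠ Fin.last n → q ≠ Fin.last n → Y p q = 0 := by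
      intro p q hp hq
      rw [hYdef, Ring.lie_def, Matrix.sub_apply, mul_apply, mul_apply,
        Finset.sum_eq_zero, Finset.sum_eq_zero, sub_zero]
      · intro k _
        rw [hXent k q (fun h => hq h.2), mul_zero]
      · intro k _
        rw [hXent p k (fun h => hp h.1), zero_mul]
    have hYll : Y (Fin.last n) (Fin.last n) = 0 := by
      rw [hYdef, Ring.lie_def, Matrix.sub_apply, mul_apply, mul_apply,
        Finset.sum_eq_single (Fin.last n), Finset.sum_eq_single (Fin.last n)]
      · ring
      · intro k _ hk
        rw [hXent k (Fin.last n) (fun h => hk h.1), mul_zero]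
      · intro h; exact absurd (Finset.mem_univ _) h
      · intro k _ hk
        rw [hXent (Fin.last n) k (fun h => hk h.2), zero_mul]
      · intro h; exact absurd (Finset.mem_univ _) h
    have hYm : Y ∈ 𝔪 := (hm_iff Y).2 ⟨hYskew, hYb⟩
    have hprY : pr Y = Y := hprm Y hYm
    set Y' := ⁅diagonal (dfun n), Y⁆ with hY'def
    have hY'skew : Y'ᴴ = -Y' := skew_lie w0_skew hYskew
    have hY'm : Y' ∈ 𝔪 := by
      rw [hm_iff]
      refine ⟨hY'skew, fun p q hp hq => ?_⟩
      rw [hY'def, lie_diagonal_apply, hYb p q hp hq, mul_zero]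
    have hdd : ⁅diagonal (dfun n), Y'⁆ = -Y := by
      ext p q
      rw [lie_diagonal_apply, hY'def, lie_diagonal_apply, neg_apply]
      by_cases hp : p = Fin.last n
      · by_cases hq : q = Fin.last n
        · rw [hp, hq, hYll]; ring
        · have hdp : dfun n p = 0 := by rw [hp]; exact dfun_last
          have hdq : dfun n q = Complex.I := if_neg hq
          rw [hdp, hdq]
          have : ((0:ℂ) - Complex.I) * (((0:ℂ) - Complex.I) * Y p q)
              = (Complex.I * Complex.I) * Y p q := by ring
          rw [this, Complex.I_mul_I]; ring
      · by_cases hq : q = Fin.last n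
        · have hdq : dfun n q = 0 := by rw [hq]; exact dfun_last
          have hdp : dfun n p = Complex.I := if_neg hp
          rw [hdp, hdq]
          have : ((Complex.I) - 0) * (((Complex.I) - 0) * Y p q)
              = (Complex.I * Complex.I) * Y p q := by ring
          rw [this, Complex.I_mul_I]; ring
        · rw [hYb p q hp hq]; ring
    have horth : ∀ v ∈ 𝔪₀, α Y v = 0 := by
      intro v hv
      have hvm : v ∈ 𝔪 := ((h𝔪₀ v).1 hv).1
      have hcomm : ⁅diagonal (dfun n), v⁆ = 0 := ((h𝔪₀ v).1 hv).2 _ hw0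
      have hkey := hinvα (diagonal (dfun n)) hw0 Y' hY'm v hvm
      rw [hdd, hcomm] at hkey
      simp only [map_neg, LinearMap.neg_apply, map_zero] at hkey
      linarith
    rw [hprY, horth X hXm0, horth u hu, mul_zero, add_zero]
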